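/- arXiv:2003.01651 — 3 statements merged into one kernel-verified Lean document; each statement's English description precedes it below -/
import Mathlib

section
/- Let f : 𝔻 → ℂ be analytic with |f(z)| ≤ 1 for all z ∈ 𝔻, and let z₁, …, z_N ∈ 𝔻 be distinct with w_i = f(z_i). Then the Pick matrix P with entries P_{ik} = (1 - w_i \overline{w_k})/(1 - z_i \overline{z_k}) is positive semidefinite. -/
open Complex Set
open scoped ComplexOrder

section PickAux

open Metric intervalIntegral

private lemma pick_ne1 {a ζ : ℂ} (ha : ‖a‖ < 1) (hζ : ‖ζ‖ ≤ 1) : 1 - (starRingEnd ℂ) a * ζ ≠ 0 := by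
  intro h
  have h1 : (starRingEnd ℂ) a * ζ = 1 := by linear_combination -h
  have : ‖(starRingEnd ℂ) a * ζ‖ < 1 := by
    rw [norm_mul, RCLike.norm_conj]
    calc ‖a‖ * ‖ζ‖ ≤ ‖a‖ * 1 := by gcongr
    _ < 1 := by simpa using ha
  rw [h1] at this; simp at this

private lemma pick_conj_ker {r : ℝ} (hr : 0 < r) (hr1 : r < 1) {a : ℂ} (ha : ‖a‖ < 1) (θ : ℝ) :
    (starRingEnd ℂ) ((1 - (starRingEnd ℂ) a * circleMap 0 r θ)⁻¹)
      = circleMap 0 r θ * (circleMap 0 r θ - (r:ℂ)^2 * a)⁻¹ := by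
  set ζ := circleMap 0 r θ with hζdef
  have hζ0 : ζ ≠ 0 := circleMap_ne_center hr.ne'
  have hζr : ‖ζ‖ = r := by
    simp [hζdef, norm_circleMap_zero, abs_of_pos hr]
  have hmc : ζ * (starRingEnd ℂ) ζ = (r:ℂ)^2 := by
    rw [Complex.mul_conj', hζr]
  have hden1 : 1 - (starRingEnd ℂ) a * ζ ≠ 0 := pick_ne1 ha (by rw [hζr]; exact hr1.le)
  have hden2 : ζ - (r:ℂ)^2 * a ≠ 0 := by
    intro h
    have h2 : ζ = (r:ℂ)^2 * a := by linear_combination h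
    have : ‖ζ‖ < r := by
      rw [h2]
      calc ‖((r:ℂ))^2 * a‖ = r^2 * ‖a‖ := by
            rw [norm_mul, norm_pow, Complex.norm_real, Real.norm_of_nonneg hr.le]
      _ < r^2 * 1 := by gcongr
      _ ≤ r := by nlinarith
    rw [hζr] at this; linarith
  have hc : (starRingEnd ℂ) ζ = (r:ℂ)^2 / ζ := by
    rw [eq_div_iff hζ0]; linear_combination hmc
  have key : 1 - a * ((r:ℂ)^2/ζ) = (ζ - (r:ℂ)^2*a)/ζ := by field_simp
  rw [map_inv₀, map_sub, map_one, map_mul, Complex.conj_conj, hc, key, inv_div,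
    div_eq_mul_inv]

private lemma pick_pairing {r : ℝ} (hr : 0 < r) (hr1 : r < 1) {a : ℂ} (ha : ‖a‖ < 1)
    {u : ℂ → ℂ} (hu : DiffContOnCl ℂ u (ball (0:ℂ) r)) :
    (∫ θ in (0:ℝ)..(2*Real.pi),
        u (circleMap 0 r θ) * (starRingEnd ℂ) ((1 - (starRingEnd ℂ) a * circleMap 0 r θ)⁻¹))
      = 2 * Real.pi * u ((r:ℂ)^2 * a) := by
  have hw : (r:ℂ)^2 * a ∈ ball (0:ℂ) r := by
    rw [mem_ball_zero_iff]
    calc ‖((r:ℂ))^2 * a‖ = r * (r * ‖a‖) := by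
          rw [norm_mul, norm_pow, Complex.norm_real, Real.norm_of_nonneg hr.le]; ring
    _ < r * 1 := by gcongr; nlinarith
    _ = r := mul_one r
  have key := hu.circleIntegral_sub_inv_smul hw
  rw [circleIntegral] at key
  have congr1 : ∀ θ ∈ uIcc (0:ℝ) (2*Real.pi),
      u (circleMap 0 r θ) * (starRingEnd ℂ) ((1 - (starRingEnd ℂ) a * circleMap 0 r θ)⁻¹)
        = (-I) * (deriv (circleMap 0 r) θ •
            ((circleMap 0 r θ - (r:ℂ)^2 * a)⁻¹ • u (circleMap 0 r θ))) := by
    intro θ _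
    rw [pick_conj_ker hr hr1 ha θ, deriv_circleMap, smul_eq_mul, smul_eq_mul]
    have h0 : circleMap 0 r θ = circleMap 0 r θ := rfl
    have : circleMap 0 0 θ = 0 := by simp [circleMap]
    linear_combination (u (circleMap 0 r θ) * (circleMap 0 r θ) *
      (circleMap 0 r θ - (r:ℂ)^2 * a)⁻¹) * Complex.I_mul_I
  rw [intervalIntegral.integral_congr congr1, intervalIntegral.integral_const_mul, key]
  rw [smul_eq_mul]
  have : -I * (2 * ↑Real.pi * I * u (↑r ^ 2 * a)) =
      (I*I) * (-(2 * ↑Real.pi * u (↑r ^ 2 * a))) := by ring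
  rw [this, Complex.I_mul_I]
  ring

private lemma pick_cont_circ {r : ℝ} (hr : 0 < r) {u : ℂ → ℂ}
    (hu : ContinuousOn u (closedBall (0:ℂ) r)) :
    Continuous (fun θ : ℝ => u (circleMap 0 r θ)) :=
  hu.comp_continuous (continuous_circleMap 0 r) (fun θ => circleMap_mem_closedBall 0 hr.le θ)

private lemma pick_ker_cont {r : ℝ} (hr : 0 < r) (hr1 : r < 1) {a : ℂ} (ha : ‖a‖ < 1) :
    Continuous (fun θ : ℝ => (1 - (starRingEnd ℂ) a * circleMap 0 r θ)⁻¹) := by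
  apply Continuous.inv₀
  · exact (continuous_const.sub (continuous_const.mul (continuous_circleMap 0 r)))
  · intro θ
    apply pick_ne1 ha
    have : ‖circleMap 0 r θ‖ = r := by
      simp [norm_circleMap_zero, abs_of_pos hr]
    rw [this]; exact hr1.le

private lemma pick_pairing_sum {N : ℕ} (z : Fin N → ℂ) (hz : ∀ i, ‖z i‖ < 1) (e : Fin N → ℂ)
    {r : ℝ} (hr : 0 < r) (hr1 : r < 1) {u : ℂ → ℂ} (hu : DiffContOnCl ℂ u (ball (0:ℂ) r)) :
    (∫ θ in (0:ℝ)..(2*Real.pi),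
        u (circleMap 0 r θ) *
          (starRingEnd ℂ) (∑ i, e i * (1 - (starRingEnd ℂ) (z i) * circleMap 0 r θ)⁻¹))
      = ∑ i, (starRingEnd ℂ) (e i) * (2 * Real.pi * u ((r:ℂ)^2 * z i)) := by
  have hucont : Continuous (fun θ : ℝ => u (circleMap 0 r θ)) := by
    apply pick_cont_circ hr
    have := hu.continuousOn
    rwa [closure_ball (0:ℂ) hr.ne'] at this
  have congr1 : ∀ θ ∈ uIcc (0:ℝ) (2*Real.pi),
      u (circleMap 0 r θ) *
          (starRingEnd ℂ) (∑ i, e i * (1 - (starRingEnd ℂ) (z i) * circleMap 0 r θ)⁻¹)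
        = ∑ i, (starRingEnd ℂ) (e i) *
            (u (circleMap 0 r θ) *
              (starRingEnd ℂ) ((1 - (starRingEnd ℂ) (z i) * circleMap 0 r θ)⁻¹)) := by
    intro θ _
    rw [map_sum, Finset.mul_sum]
    refine Finset.sum_congr rfl fun i _ => ?_
    rw [map_mul]; ring
  rw [intervalIntegral.integral_congr congr1, intervalIntegral.integral_finset_sum]
  · refine Finset.sum_congr rfl fun i _ => ?_
    rw [intervalIntegral.integral_const_mul, pick_pairing hr hr1 (hz i) hu]
  · intro i _
    apply Continuous.intervalIntegrable
    exact continuous_const.mul (hucont.mul (Complex.continuous_conj.comp (pick_ker_cont hr hr1 (hz i))))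

private lemma pick_key {N : ℕ} (f : ℂ → ℂ)
    (hf : DifferentiableOn ℂ f {z : ℂ | ‖z‖ < 1})
    (hfb : ∀ z ∈ {z : ℂ | ‖z‖ < 1}, ‖f z‖ ≤ 1)
    (z : Fin N → ℂ) (hz : ∀ i, ‖z i‖ < 1) (c : Fin N → ℂ)
    {r : ℝ} (hr : 0 < r) (hr1 : r < 1) :
    0 ≤ ∑ i, ∑ k, c i * (starRingEnd ℂ) (c k) *
      (1 - f ((r:ℂ)^2 * z i) * (starRingEnd ℂ) (f ((r:ℂ)^2 * z k))) *
      (1 - (starRingEnd ℂ) (z k) * ((r:ℂ)^2 * z i))⁻¹ := by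
  have hsub : closedBall (0:ℂ) r ⊆ {z : ℂ | ‖z‖ < 1} := by
    intro ξ hξ
    simp only [mem_closedBall, Complex.dist_eq, sub_zero] at hξ
    simp only [mem_setOf_eq]
    calc ‖ξ‖ = ‖ξ‖ := rfl
    _ ≤ r := hξ
    _ < 1 := hr1
  set v : Fin N → ℂ := fun i => f ((r:ℂ)^2 * z i) with hv
  set eg : Fin N → ℂ := fun k => (starRingEnd ℂ) (c k) with heg
  set eh : Fin N → ℂ := fun k => (starRingEnd ℂ) (c k * v k) with heh
  set g : ℂ → ℂ := fun ξ => ∑ k, eg k * (1 - (starRingEnd ℂ) (z k) * ξ)⁻¹ with hgdef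
  set h : ℂ → ℂ := fun ξ => ∑ k, eh k * (1 - (starRingEnd ℂ) (z k) * ξ)⁻¹ with hhdef
  -- differentiability
  have hker : ∀ (e : Fin N → ℂ), DifferentiableOn ℂ
      (fun ξ => ∑ k, e k * (1 - (starRingEnd ℂ) (z k) * ξ)⁻¹) (closedBall (0:ℂ) r) := by
    intro e
    apply DifferentiableOn.fun_sum
    intro k _
    apply DifferentiableOn.const_mul
    apply DifferentiableOn.inv
    · exact (differentiableOn_const _).sub ((differentiableOn_const _).mul (differentiableOn_id))
    · intro ξ hξ
      apply pick_ne1 (hz k)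
      have := hsub hξ
      simpa using this.le
  have hg : DiffContOnCl ℂ g (ball (0:ℂ) r) := by
    apply DifferentiableOn.diffContOnCl
    rw [closure_ball (0:ℂ) hr.ne']
    exact hker eg
  have hh : DiffContOnCl ℂ h (ball (0:ℂ) r) := by
    apply DifferentiableOn.diffContOnCl
    rw [closure_ball (0:ℂ) hr.ne']
    exact hker eh
  have hfh : DiffContOnCl ℂ (fun ξ => f ξ * h ξ) (ball (0:ℂ) r) := by
    apply DifferentiableOn.diffContOnCl
    rw [closure_ball (0:ℂ) hr.ne']
    exact (hf.mono hsub).mul (hker eh)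
  -- pairing identities
  have E1 := pick_pairing_sum z hz eh hr hr1 hh
  have E2 := pick_pairing_sum z hz eg hr hr1 hfh
  have E3 := pick_pairing_sum z hz eg hr hr1 hg
  -- real integrals
  set Hreal : ℝ := ∫ θ in (0:ℝ)..(2*Real.pi), ‖h (circleMap 0 r θ)‖^2 with hHreal
  set Greal : ℝ := ∫ θ in (0:ℝ)..(2*Real.pi), ‖g (circleMap 0 r θ)‖^2 with hGreal
  have hHc : (Hreal : ℂ) = ∑ i, (starRingEnd ℂ) (eh i) * (2 * Real.pi * h ((r:ℂ)^2 * z i)) := by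
    rw [← E1, hHreal, ← intervalIntegral.integral_ofReal]
    apply intervalIntegral.integral_congr
    intro θ _
    simp only [Complex.ofReal_pow]
    rw [← Complex.mul_conj']
  have hGc : (Greal : ℂ) = ∑ i, (starRingEnd ℂ) (eg i) * (2 * Real.pi * g ((r:ℂ)^2 * z i)) := by
    rw [← E3, hGreal, ← intervalIntegral.integral_ofReal]
    apply intervalIntegral.integral_congr
    intro θ _
    simp only [Complex.ofReal_pow]
    rw [← Complex.mul_conj']
  have hE2H : (∫ θ in (0:ℝ)..(2*Real.pi),
      (f (circleMap 0 r θ) * h (circleMap 0 r θ)) * (starRingEnd ℂ) (g (circleMap 0 r θ)))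
      = (Hreal : ℂ) := by
    rw [E2, hHc]
    refine Finset.sum_congr rfl fun i _ => ?_
    simp only [heh, heg, map_mul, Complex.conj_conj, hv]
    ring
  -- continuity facts
  have hclos : ∀ {u : ℂ → ℂ}, DiffContOnCl ℂ u (ball (0:ℂ) r) →
      Continuous (fun θ : ℝ => u (circleMap 0 r θ)) := by
    intro u hu
    apply pick_cont_circ hr
    have := hu.continuousOn
    rwa [closure_ball (0:ℂ) hr.ne'] at this
  have hgcont := hclos hg
  have hhcont := hclos hh
  have hfcont : Continuous (fun θ : ℝ => f (circleMap 0 r θ)) :=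
    pick_cont_circ hr (hf.continuousOn.mono hsub)
  have hnormf : ∀ θ : ℝ, ‖f (circleMap 0 r θ)‖ ≤ 1 := fun θ =>
    hfb _ (hsub (circleMap_mem_closedBall 0 hr.le θ))
  have hcrosscont : Continuous (fun θ : ℝ =>
      (f (circleMap 0 r θ) * h (circleMap 0 r θ)) * (starRingEnd ℂ) (g (circleMap 0 r θ))) :=
    (hfcont.mul hhcont).mul (Complex.continuous_conj.comp hgcont)
  have hHG : Hreal ≤ Greal := by
    have h1 : Hreal = ∫ θ in (0:ℝ)..(2*Real.pi),
        ((f (circleMap 0 r θ) * h (circleMap 0 r θ)) *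
          (starRingEnd ℂ) (g (circleMap 0 r θ))).re := by
      have h2 := Complex.reCLM.intervalIntegral_comp_comm
        (hcrosscont.intervalIntegrable (μ := MeasureTheory.volume) 0 (2*Real.pi))
      simp only [Complex.reCLM_apply] at h2
      rw [h2, hE2H, Complex.ofReal_re]
    have h3 : ∀ θ ∈ Icc (0:ℝ) (2*Real.pi),
        ((f (circleMap 0 r θ) * h (circleMap 0 r θ)) *
          (starRingEnd ℂ) (g (circleMap 0 r θ))).re
        ≤ (‖h (circleMap 0 r θ)‖^2 + ‖g (circleMap 0 r θ)‖^2)/2 := by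
      intro θ _
      have hb1 := Complex.re_le_norm ((f (circleMap 0 r θ) * h (circleMap 0 r θ)) *
        (starRingEnd ℂ) (g (circleMap 0 r θ)))
      have hb2 : ‖(f (circleMap 0 r θ) * h (circleMap 0 r θ)) *
          (starRingEnd ℂ) (g (circleMap 0 r θ))‖
          = ‖f (circleMap 0 r θ)‖ * ‖h (circleMap 0 r θ)‖ * ‖g (circleMap 0 r θ)‖ := by
        rw [norm_mul, norm_mul, RCLike.norm_conj]
      have hn1 := hnormf θ
      have p1 : (0:ℝ) ≤ ‖h (circleMap 0 r θ)‖ := norm_nonneg _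
      have p2 : (0:ℝ) ≤ ‖g (circleMap 0 r θ)‖ := norm_nonneg _
      nlinarith [sq_nonneg (‖h (circleMap 0 r θ)‖ - ‖g (circleMap 0 r θ)‖),
        mul_nonneg p1 p2]
    have h4 : (∫ θ in (0:ℝ)..(2*Real.pi),
        ((f (circleMap 0 r θ) * h (circleMap 0 r θ)) *
          (starRingEnd ℂ) (g (circleMap 0 r θ))).re)
        ≤ ∫ θ in (0:ℝ)..(2*Real.pi),
            (‖h (circleMap 0 r θ)‖^2 + ‖g (circleMap 0 r θ)‖^2)/2 := by
      apply intervalIntegral.integral_mono_on Real.two_pi_pos.le _ _ h3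
      · exact (Complex.continuous_re.comp hcrosscont).intervalIntegrable 0 (2*Real.pi)
      · apply Continuous.intervalIntegrable
        exact (((hhcont.norm.pow 2).add (hgcont.norm.pow 2)).div_const 2)
    have h5 : (∫ θ in (0:ℝ)..(2*Real.pi),
        (‖h (circleMap 0 r θ)‖^2 + ‖g (circleMap 0 r θ)‖^2)/2) = (Hreal + Greal)/2 := by
      rw [intervalIntegral.integral_div, intervalIntegral.integral_add
        (f := fun θ => ‖h (circleMap 0 r θ)‖^2) (g := fun θ => ‖g (circleMap 0 r θ)‖^2)
        ((hhcont.norm.pow 2).intervalIntegrable 0 (2*Real.pi))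
        ((hgcont.norm.pow 2).intervalIntegrable 0 (2*Real.pi))]
    rw [h1] at *
    linarith
  have h2pi : (2 * (Real.pi:ℂ)) ≠ 0 := by
    simp [Real.pi_ne_zero, Complex.ofReal_ne_zero]
  have hfinal : (2 * (Real.pi:ℂ)) * (∑ i, ∑ k, c i * (starRingEnd ℂ) (c k) *
      (1 - v i * (starRingEnd ℂ) (v k)) * (1 - (starRingEnd ℂ) (z k) * ((r:ℂ)^2 * z i))⁻¹)
      = (Greal:ℂ) - (Hreal:ℂ) := by
    rw [hGc, hHc, ← Finset.sum_sub_distrib, Finset.mul_sum]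
    refine Finset.sum_congr rfl fun i _ => ?_
    simp only [hgdef, hhdef, heg, heh, map_mul, Complex.conj_conj, Finset.mul_sum]
    rw [← Finset.sum_sub_distrib]
    refine Finset.sum_congr rfl fun k _ => ?_
    ring
  have hT : (∑ i, ∑ k, c i * (starRingEnd ℂ) (c k) *
      (1 - v i * (starRingEnd ℂ) (v k)) * (1 - (starRingEnd ℂ) (z k) * ((r:ℂ)^2 * z i))⁻¹)
      = (((Greal - Hreal)/(2*Real.pi) : ℝ) : ℂ) := by
    apply mul_left_cancel₀ h2pi
    rw [hfinal]
    push_cast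
    field_simp
  rw [hT, Complex.zero_le_real]
  apply div_nonneg (by linarith) (by positivity)
end PickAux

/-- Pick's theorem: if `f : 𝔻 → ℂ` is analytic with `|f| ≤ 1` on 𝔻 and `w i = f (z i)` at
distinct points `z i ∈ 𝔻`, then the Pick matrix `(1 - w i * conj (w k)) / (1 - z i * conj (z k))`
is positive semidefinite. -/
theorem stmt_3 (N : ℕ) (f : ℂ → ℂ)
    (hf : DifferentiableOn ℂ f {z : ℂ | ‖z‖ < 1})
    (hfb : ∀ z ∈ {z : ℂ | ‖z‖ < 1}, ‖f z‖ ≤ 1)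
    (z : Fin N → ℂ) (hz : ∀ i, ‖z i‖ < 1) (hzdist : Function.Injective z)
    (w : Fin N → ℂ) (hw : ∀ i, w i = f (z i)) :
    Matrix.PosSemidef (Matrix.of fun i k : Fin N =>
      (1 - w i * (starRingEnd ℂ) (w k)) / (1 - z i * (starRingEnd ℂ) (z k))) := by
  rw [Matrix.posSemidef_iff_dotProduct_mulVec]
  constructor
  · rw [Matrix.IsHermitian]
    ext i k
    simp only [Matrix.conjTranspose_apply, Matrix.of_apply, star_div₀, star_sub, star_one,
      star_mul', RCLike.star_def, Complex.conj_conj]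
    congr 1 <;> ring
  · intro x
    set c : Fin N → ℂ := fun i => (starRingEnd ℂ) (x i) with hc
    set T : ℂ := ∑ i, ∑ k, c i * (starRingEnd ℂ) (c k) *
      (1 - w i * (starRingEnd ℂ) (w k)) * (1 - (starRingEnd ℂ) (z k) * z i)⁻¹ with hT
    have hgoal : dotProduct (star x) (Matrix.mulVec (Matrix.of fun i k : Fin N =>
        (1 - w i * (starRingEnd ℂ) (w k)) / (1 - z i * (starRingEnd ℂ) (z k))) x) = T := by
      rw [hT, dotProduct]
      refine Finset.sum_congr rfl fun i _ => ?_
      rw [Matrix.mulVec, dotProduct, Finset.mul_sum]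
      refine Finset.sum_congr rfl fun k _ => ?_
      simp only [Matrix.of_apply, Pi.star_apply, hc, Complex.conj_conj, RCLike.star_def]
      rw [div_eq_mul_inv, mul_comm ((starRingEnd ℂ) (z k)) (z i)]
      ring
    rw [hgoal]
    -- now take the limit r → 1⁻ of pick_key
    set S : ℝ → ℂ := fun r => ∑ i, ∑ k, c i * (starRingEnd ℂ) (c k) *
      (1 - f ((r:ℂ)^2 * z i) * (starRingEnd ℂ) (f ((r:ℂ)^2 * z k))) *
      (1 - (starRingEnd ℂ) (z k) * ((r:ℂ)^2 * z i))⁻¹ with hS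
    have hnb : (nhdsWithin (1:ℝ) (Set.Ioo 0 1)).NeBot :=
      right_nhdsWithin_Ioo_neBot (by norm_num)
    have hscaled : ∀ i : Fin N, Filter.Tendsto (fun r : ℝ => (r:ℂ)^2 * z i)
        (nhdsWithin 1 (Set.Ioo 0 1)) (nhdsWithin (z i) {z : ℂ | ‖z‖ < 1}) := by
      intro i
      rw [tendsto_nhdsWithin_iff]
      constructor
      · have : Filter.Tendsto (fun r : ℝ => (r:ℂ)^2 * z i) (nhds 1)
            (nhds (((1:ℝ):ℂ)^2 * z i)) := by
          exact (((Complex.continuous_ofReal.pow 2).mul continuous_const).tendsto 1)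
        norm_num at this
        exact this.mono_left nhdsWithin_le_nhds
      · filter_upwards [eventually_mem_nhdsWithin] with r hr
        show ‖((r:ℂ))^2 * z i‖ < 1
        rcases hr with ⟨hr0, hr1⟩
        calc ‖((r:ℂ))^2 * z i‖ = r^2 * ‖z i‖ := by
              rw [norm_mul, norm_pow, Complex.norm_real, Real.norm_of_nonneg hr0.le]
        _ ≤ 1 * ‖z i‖ := by gcongr; nlinarith
        _ < 1 := by rw [one_mul]; exact hz i
    have hfi : ∀ i : Fin N, Filter.Tendsto (fun r : ℝ => f ((r:ℂ)^2 * z i))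
        (nhdsWithin 1 (Set.Ioo 0 1)) (nhds (w i)) := by
      intro i
      rw [hw i]
      exact ((hf.continuousOn (z i) (by simpa using hz i)).tendsto).comp (hscaled i)
    have hlim : Filter.Tendsto S (nhdsWithin 1 (Set.Ioo 0 1)) (nhds T) := by
      rw [hS, hT]
      apply tendsto_finset_sum
      intro i _
      apply tendsto_finset_sum
      intro k _
      apply Filter.Tendsto.mul
      · exact (tendsto_const_nhds.sub ((hfi i).mul
          ((Complex.continuous_conj.tendsto _).comp (hfi k)))).const_mul _
      · apply Filter.Tendsto.inv₀
        · have : Filter.Tendsto (fun r : ℝ => 1 - (starRingEnd ℂ) (z k) * ((r:ℂ)^2 * z i))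
              (nhdsWithin 1 (Set.Ioo 0 1)) (nhds (1 - (starRingEnd ℂ) (z k) * z i)) := by
            apply tendsto_const_nhds.sub
            apply Filter.Tendsto.const_mul
            exact ((hscaled i).mono_right nhdsWithin_le_nhds)
          exact this
        · exact pick_ne1 (hz k) (hz i).le
    have hpos : ∀ᶠ r in nhdsWithin (1:ℝ) (Set.Ioo 0 1), 0 ≤ S r := by
      filter_upwards [eventually_mem_nhdsWithin] with r hr
      exact pick_key f hf hfb z hz c hr.1 hr.2
    have hre : 0 ≤ T.re := by
      apply ge_of_tendsto ((Complex.continuous_re.tendsto _).comp hlim)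
      filter_upwards [hpos] with r hr
      exact (Complex.le_def.mp hr).1
    have him : T.im = 0 := by
      have h1 : Filter.Tendsto (fun r => (S r).im) (nhdsWithin (1:ℝ) (Set.Ioo 0 1))
          (nhds T.im) := (Complex.continuous_im.tendsto _).comp hlim
      have h2 : Filter.Tendsto (fun r => (S r).im) (nhdsWithin (1:ℝ) (Set.Ioo 0 1))
          (nhds 0) := by
        apply Filter.Tendsto.congr' _ tendsto_const_nhds
        filter_upwards [hpos] with r hr
        exact ((Complex.le_def.mp hr).2).symm ▸ rfl
      exact tendsto_nhds_unique h1 h2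
    rw [Complex.le_def]
    simp [hre, him]
end

section
/- Let g : 𝔻 → ℂ be analytic with Re g(z) ≥ 0 for all z ∈ 𝔻, and let z₁, …, z_N ∈ 𝔻 be distinct with ν_i = g(z_i). Then the matrix with entries (ν_i + \overline{ν_k})/(1 - z_i \overline{z_k}) is positive semidefinite. -/
open Complex Set Metric Filter
open scoped ComplexOrder Real Topology

set_option maxHeartbeats 1000000


lemma one_sub_mul_conj_ne {ζ w : ℂ} (hζ : ‖ζ‖ ≤ 1) (hw : ‖w‖ < 1) :
    1 - ζ * (starRingEnd ℂ) w ≠ 0 := by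
  intro h
  have : ‖ζ * (starRingEnd ℂ) w‖ < 1 := by
    rw [norm_mul, RCLike.norm_conj]
    calc ‖ζ‖ * ‖w‖ ≤ 1 * ‖w‖ := mul_le_mul_of_nonneg_right hζ (norm_nonneg _)
      _ < 1 := by simpa using hw
  have h1 : ζ * (starRingEnd ℂ) w = 1 := by linear_combination -h
  rw [h1] at this; simp at this

lemma cauchy_pair (h : ℂ → ℂ) (hd : DifferentiableOn ℂ h (closedBall 0 1))
    {za zb : ℂ} (ha : ‖za‖ < 1) (hb : ‖zb‖ < 1) :
    (∫ θ in (0:ℝ)..(2*π), (circleMap 0 1 θ * I) *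
      ((circleMap 0 1 θ - za)⁻¹ *
        (h (circleMap 0 1 θ) * (1 - circleMap 0 1 θ * (starRingEnd ℂ) zb)⁻¹)))
    = (2*π*I) * (h za * (1 - za * (starRingEnd ℂ) zb)⁻¹) := by
  have hfd : DifferentiableOn ℂ (fun ζ => h ζ * (1 - ζ * (starRingEnd ℂ) zb)⁻¹)
      (closedBall 0 1) := by
    apply hd.mul
    apply DifferentiableOn.inv
    · exact (differentiableOn_const 1).sub
        ((differentiableOn_id).mul (differentiableOn_const _))
    · intro ζ hζ
      exact one_sub_mul_conj_ne (by simpa [dist_eq_norm] using hζ) hb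
  have := hfd.circleIntegral_sub_inv_smul (w := za) (by simpa [dist_eq_norm] using ha)
  simpa only [circleIntegral, deriv_circleMap, smul_eq_mul, mul_assoc] using this

lemma key_pos (h : ℂ → ℂ) (hd : DifferentiableOn ℂ h (closedBall 0 1))
    (hre : ∀ ζ : ℂ, ‖ζ‖ = 1 → 0 ≤ (h ζ).re)
    {N : ℕ} (z : Fin N → ℂ) (hz : ∀ i, ‖z i‖ < 1) (x : Fin N → ℂ) :
    0 ≤ ∑ i, ∑ k, (starRingEnd ℂ) (x i) * x k *
        ((h (z i) + (starRingEnd ℂ) (h (z k))) * (1 - z i * (starRingEnd ℂ) (z k))⁻¹) := by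
  set ζ : ℝ → ℂ := circleMap 0 1 with hζdef
  have hζ1 : ∀ θ, ‖ζ θ‖ = 1 := fun θ => by
    simp [hζdef, norm_circleMap_zero]
  have hζmem : ∀ θ, ζ θ ∈ closedBall (0:ℂ) 1 := fun θ => by
    simp [mem_closedBall, dist_eq_norm, hζ1 θ]
  have hζz : ∀ θ (i : Fin N), ζ θ - z i ≠ 0 := fun θ i => by
    intro hc
    have he : ζ θ = z i := by linear_combination hc
    have h1 := hz i
    rw [← he] at h1
    simp [hζ1 θ] at h1
  have hζconj : ∀ θ, (starRingEnd ℂ) (ζ θ) * ζ θ = 1 := fun θ => by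
    rw [mul_comm, Complex.mul_conj]
    norm_cast
    rw [Complex.normSq_eq_norm_sq, hζ1 θ]; norm_num
  have hne : ∀ θ (k : Fin N), 1 - ζ θ * (starRingEnd ℂ) (z k) ≠ 0 := fun θ k =>
    one_sub_mul_conj_ne (le_of_eq (hζ1 θ)) (hz k)
  have hkey : ∀ θ (k : Fin N),
      ((starRingEnd ℂ) (ζ θ) - (starRingEnd ℂ) (z k))⁻¹
        = ζ θ * (1 - ζ θ * (starRingEnd ℂ) (z k))⁻¹ := by
    intro θ k
    have hm : ((starRingEnd ℂ) (ζ θ) - (starRingEnd ℂ) (z k))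
        * (ζ θ * (1 - ζ θ * (starRingEnd ℂ) (z k))⁻¹) = 1 := by
      have e1 : ((starRingEnd ℂ) (ζ θ) - (starRingEnd ℂ) (z k)) * ζ θ
          = 1 - ζ θ * (starRingEnd ℂ) (z k) := by linear_combination hζconj θ
      rw [← mul_assoc, e1, mul_inv_cancel₀ (hne θ k)]
    exact (eq_inv_of_mul_eq_one_right hm).symm
  set A : ℝ → ℂ := fun θ => ∑ i, (starRingEnd ℂ) (x i) * (ζ θ - z i)⁻¹ with hAdef
  have hAconj : ∀ θ, (starRingEnd ℂ) (A θ)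
      = ∑ k, x k * (ζ θ * (1 - ζ θ * (starRingEnd ℂ) (z k))⁻¹) := by
    intro θ
    rw [hAdef, map_sum]
    refine Finset.sum_congr rfl fun k _ => ?_
    rw [map_mul, map_inv₀, map_sub, Complex.conj_conj, hkey θ k]
  set F : Fin N → Fin N → ℝ → ℂ := fun i k θ => (ζ θ * I) *
      ((ζ θ - z i)⁻¹ * (h (ζ θ) * (1 - ζ θ * (starRingEnd ℂ) (z k))⁻¹)) with hFdef
  have hH : Continuous fun θ => h (ζ θ) :=
    hd.continuousOn.comp_continuous (continuous_circleMap 0 1) hζmem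
  have hcont : ∀ i k, Continuous (F i k) := by
    intro i k
    refine ((continuous_circleMap 0 1).mul continuous_const).mul (Continuous.mul ?_ (hH.mul ?_))
    · exact (((continuous_circleMap 0 1).sub continuous_const).inv₀ (fun θ => hζz θ i))
    · exact ((continuous_const.sub ((continuous_circleMap 0 1).mul continuous_const)).inv₀
        (fun θ => hne θ k))
  have hAcont : Continuous A := by
    rw [hAdef]
    exact continuous_finset_sum _ (fun i _ => continuous_const.mul
      (((continuous_circleMap 0 1).sub continuous_const).inv₀ (fun θ => hζz θ i)))
  set T : ℂ := ∑ i, ∑ k, (starRingEnd ℂ) (x i) * x k *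
      (h (z i) * (1 - z i * (starRingEnd ℂ) (z k))⁻¹) with hTdef
  set G : ℝ → ℂ := fun θ => h (ζ θ) * ((Complex.normSq (A θ) : ℝ) : ℂ) with hGdef
  have hGcont : Continuous G := by
    rw [hGdef]
    exact hH.mul (Complex.continuous_ofReal.comp (Complex.continuous_normSq.comp hAcont))
  set J : ℂ := ∫ θ in (0:ℝ)..(2*π), G θ with hJdef
  have hmain : (2*π*I) * T = I * J := by
    have h1 : (2*π*I) * T = ∑ i, ∑ k, ∫ θ in (0:ℝ)..(2*π),
        (starRingEnd ℂ) (x i) * x k * F i k θ := by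
      rw [hTdef, Finset.mul_sum]
      refine Finset.sum_congr rfl fun i _ => ?_
      rw [Finset.mul_sum]
      refine Finset.sum_congr rfl fun k _ => ?_
      rw [intervalIntegral.integral_const_mul, hFdef, cauchy_pair h hd (hz i) (hz k)]
      ring
    have h2 : (∫ θ in (0:ℝ)..(2*π), ∑ i, ∑ k, (starRingEnd ℂ) (x i) * x k * F i k θ)
        = ∑ i, ∑ k, ∫ θ in (0:ℝ)..(2*π), (starRingEnd ℂ) (x i) * x k * F i k θ := by
      have hint1 : ∀ i k : Fin N, IntervalIntegrable
          (fun θ => (starRingEnd ℂ) (x i) * x k * F i k θ) MeasureTheory.volume 0 (2*π) :=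
        fun i k => (continuous_const.mul (hcont i k)).intervalIntegrable _ _
      have hint2 : ∀ i : Fin N, IntervalIntegrable
          (fun θ => ∑ k, (starRingEnd ℂ) (x i) * x k * F i k θ) MeasureTheory.volume 0 (2*π) :=
        fun i => (continuous_finset_sum _ (fun k _ =>
          continuous_const.mul (hcont i k))).intervalIntegrable _ _
      calc (∫ θ in (0:ℝ)..(2*π), ∑ i, ∑ k, (starRingEnd ℂ) (x i) * x k * F i k θ)
          = ∑ i, ∫ θ in (0:ℝ)..(2*π), ∑ k, (starRingEnd ℂ) (x i) * x k * F i k θ :=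
            intervalIntegral.integral_finset_sum (fun i _ => hint2 i)
        _ = ∑ i, ∑ k, ∫ θ in (0:ℝ)..(2*π), (starRingEnd ℂ) (x i) * x k * F i k θ :=
            Finset.sum_congr rfl fun i _ =>
              intervalIntegral.integral_finset_sum (fun k _ => hint1 i k)
    have h3 : ∀ θ, (∑ i, ∑ k, (starRingEnd ℂ) (x i) * x k * F i k θ) = I * G θ := by
      intro θ
      have e : (∑ i, ∑ k, (starRingEnd ℂ) (x i) * x k * F i k θ)
          = A θ * (starRingEnd ℂ) (A θ) * (I * h (ζ θ)) := by
        rw [hAconj θ, hAdef]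
        simp only
        rw [Finset.sum_mul_sum]
        simp only [Finset.sum_mul]
        refine Finset.sum_congr rfl fun i _ => ?_
        refine Finset.sum_congr rfl fun k _ => ?_
        simp only [hFdef]
        ring
      rw [e, Complex.mul_conj, hGdef]
      ring
    rw [h1, ← h2]
    rw [intervalIntegral.integral_congr (g := fun θ => I * G θ) (fun θ _ => h3 θ)]
    rw [intervalIntegral.integral_const_mul, hJdef]
  have hJre : 0 ≤ J.re := by
    have hint : IntervalIntegrable G MeasureTheory.volume 0 (2*π) :=
      hGcont.intervalIntegrable _ _
    have hcomm := Complex.reCLM.intervalIntegral_comp_comm hint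
    rw [hJdef]
    have hre' : (∫ θ in (0:ℝ)..(2*π), G θ).re = ∫ θ in (0:ℝ)..(2*π), (G θ).re :=
      hcomm.symm
    rw [hre']
    apply intervalIntegral.integral_nonneg (by positivity)
    intro θ _
    rw [hGdef]
    simp only [Complex.mul_re, Complex.ofReal_re, Complex.ofReal_im, mul_zero, sub_zero]
    exact mul_nonneg (hre _ (hζ1 θ)) (Complex.normSq_nonneg _)
  have hTre : 0 ≤ T.re := by
    have h2T : ((2*π:ℝ) : ℂ) * T = J := by
      apply mul_left_cancel₀ I_ne_zero
      push_cast
      linear_combination hmain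
    have := congrArg Complex.re h2T
    rw [Complex.re_ofReal_mul] at this
    nlinarith [Real.pi_pos, hJre]
  have hsplit : (∑ i, ∑ k, (starRingEnd ℂ) (x i) * x k *
        ((h (z i) + (starRingEnd ℂ) (h (z k))) * (1 - z i * (starRingEnd ℂ) (z k))⁻¹))
      = T + (starRingEnd ℂ) T := by
    have hT2 : (∑ i, ∑ k, (starRingEnd ℂ) (x i) * x k *
        ((starRingEnd ℂ) (h (z k)) * (1 - z i * (starRingEnd ℂ) (z k))⁻¹))
        = (starRingEnd ℂ) T := by
      rw [hTdef]
      simp only [map_sum, map_mul, map_inv₀, map_sub, map_one, Complex.conj_conj]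
      rw [Finset.sum_comm]
      exact Finset.sum_congr rfl fun i _ => Finset.sum_congr rfl fun k _ => by ring
    rw [← hT2, hTdef, ← Finset.sum_add_distrib]
    refine Finset.sum_congr rfl fun i _ => ?_
    rw [← Finset.sum_add_distrib]
    exact Finset.sum_congr rfl fun k _ => by ring
  rw [hsplit, Complex.add_conj]
  norm_cast
  linarith

/-- Half-plane Pick condition: if `g : 𝔻 → ℂ` is analytic with `Re g ≥ 0` on 𝔻 and
`ν i = g (z i)` at distinct `z i ∈ 𝔻`, then the matrix
`(ν i + conj (ν k)) / (1 - z i * conj (z k))` is positive semidefinite. -/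
theorem stmt_4 (N : ℕ) (g : ℂ → ℂ)
    (hg : DifferentiableOn ℂ g {z : ℂ | ‖z‖ < 1})
    (hgre : ∀ z ∈ {z : ℂ | ‖z‖ < 1}, 0 ≤ (g z).re)
    (z : Fin N → ℂ) (hz : ∀ i, ‖z i‖ < 1) (hzdist : Function.Injective z)
    (ν : Fin N → ℂ) (hν : ∀ i, ν i = g (z i)) :
    Matrix.PosSemidef (Matrix.of fun i k : Fin N =>
      (ν i + (starRingEnd ℂ) (ν k)) / (1 - z i * (starRingEnd ℂ) (z k))) := by
  have hOpen : IsOpen {z : ℂ | ‖z‖ < 1} := isOpen_lt continuous_norm continuous_const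
  rw [Matrix.posSemidef_iff_dotProduct_mulVec]
  constructor
  · refine Matrix.ext fun i k => ?_
    simp only [Matrix.conjTranspose_apply, Matrix.of_apply, star_def, map_div₀, map_add,
      map_one, map_sub, map_mul, Complex.conj_conj]
    ring
  · intro x
    set Q : ℂ := ∑ i, ∑ k, (starRingEnd ℂ) (x i) * x k *
        ((g (z i) + (starRingEnd ℂ) (g (z k))) * (1 - z i * (starRingEnd ℂ) (z k))⁻¹) with hQdef
    have hQeq : dotProduct (star x) ((Matrix.of fun i k : Fin N =>
        (ν i + (starRingEnd ℂ) (ν k)) / (1 - z i * (starRingEnd ℂ) (z k))).mulVec x) = Q := by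
      rw [hQdef]
      simp only [dotProduct, Matrix.mulVec, Pi.star_apply, Matrix.of_apply,
        Finset.mul_sum, hν, div_eq_mul_inv, star_def]
      exact Finset.sum_congr rfl fun i _ => Finset.sum_congr rfl fun k _ => by ring
    rw [hQeq]
    set Φ : ℝ → ℂ := fun s => ∑ i, ∑ k, (starRingEnd ℂ) (x i) * x k *
        ((g ((s:ℂ) * z i) + (starRingEnd ℂ) (g ((s:ℂ) * z k)))
          * (1 - z i * (starRingEnd ℂ) (z k))⁻¹) with hΦdef
    have hpos : ∀ s : ℝ, s ∈ Ico (0:ℝ) 1 → 0 ≤ Φ s := by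
      intro s hs
      have hmaps : ∀ w : ℂ, w ∈ closedBall (0:ℂ) 1 → (s:ℂ) * w ∈ {z : ℂ | ‖z‖ < 1} := by
        intro w hw
        simp only [mem_setOf_eq, norm_mul, Complex.norm_real, Real.norm_eq_abs,
          _root_.abs_of_nonneg hs.1]
        have hw1 : ‖w‖ ≤ 1 := by simpa [dist_eq_norm] using hw
        nlinarith [hs.2, hs.1, norm_nonneg w, hw1]
      have hd : DifferentiableOn ℂ (fun w => g ((s:ℂ) * w)) (closedBall 0 1) :=
        hg.comp ((differentiable_const _).mul differentiable_id).differentiableOn hmaps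
      have hre : ∀ ζ : ℂ, ‖ζ‖ = 1 → 0 ≤ (g ((s:ℂ) * ζ)).re := fun ζ hζ =>
        hgre _ (hmaps ζ (by simp [dist_eq_norm, hζ]))
      exact key_pos _ hd hre z hz x
    have hlim : Tendsto Φ (𝓝[<] (1:ℝ)) (𝓝 Q) := by
      rw [hΦdef, hQdef]
      refine tendsto_finset_sum _ fun i _ => tendsto_finset_sum _ fun k _ => ?_
      have hgz : ∀ j : Fin N, Tendsto (fun s : ℝ => g ((s:ℂ) * z j)) (𝓝[<] (1:ℝ)) (𝓝 (g (z j))) := by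
        intro j
        have hca : ContinuousAt g (z j) :=
          (hg.differentiableAt (hOpen.mem_nhds (hz j))).continuousAt
        have ht : Tendsto (fun s : ℝ => (s:ℂ) * z j) (𝓝[<] (1:ℝ)) (𝓝 (z j)) := by
          have : Tendsto (fun s : ℝ => (s:ℂ) * z j) (𝓝 (1:ℝ)) (𝓝 ((1:ℂ) * z j)) :=
            (Complex.continuous_ofReal.mul continuous_const).tendsto 1
          rw [one_mul] at this
          exact this.mono_left nhdsWithin_le_nhds
        exact hca.tendsto.comp ht
      have hconjt : Tendsto (fun s : ℝ => (starRingEnd ℂ) (g ((s:ℂ) * z k)))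
          (𝓝[<] (1:ℝ)) (𝓝 ((starRingEnd ℂ) (g (z k)))) :=
        (Complex.continuous_conj.tendsto _).comp (hgz k)
      exact tendsto_const_nhds.mul (((hgz i).add hconjt).mul tendsto_const_nhds)
    have hev : ∀ᶠ s in 𝓝[<] (1:ℝ), s ∈ Ico (0:ℝ) 1 := by
      filter_upwards [Ioo_mem_nhdsLT_of_mem (by norm_num : (1:ℝ) ∈ Ioc (0:ℝ) 1),
        self_mem_nhdsWithin] with s hs1 hs2
      exact ⟨le_of_lt hs1.1, hs2⟩
    rw [Complex.nonneg_iff]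
    constructor
    · refine ge_of_tendsto ((Complex.continuous_re.tendsto _).comp hlim) ?_
      filter_upwards [hev] with s hs
      exact (Complex.nonneg_iff.mp (hpos s hs)).1
    · have him : Tendsto (fun s => (Φ s).im) (𝓝[<] (1:ℝ)) (𝓝 Q.im) :=
        (Complex.continuous_im.tendsto _).comp hlim
      have him0 : Tendsto (fun s => (Φ s).im) (𝓝[<] (1:ℝ)) (𝓝 0) := by
        refine Tendsto.congr' ?_ tendsto_const_nhds
        filter_upwards [hev] with s hs
        exact (Complex.nonneg_iff.mp (hpos s hs)).2
      exact tendsto_nhds_unique him0 him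
end

section
/- Let T(s) = (s+1) + 2(s-1)e^{-2s}. Every zero s of T with Re s ≥ 0 and sufficiently large |Im s| satisfies |Re s − ln√2| < ε; more precisely, for each ε > 0 there is M > 0 such that any zero s of T with |Im s| ≥ M satisfies |s − (ln√2 + i(k + 1/2)π)| < ε for some integer k. -/
open Complex Set
open scoped Real

/-- Asymptotic zero chains of `T(s) = (s+1) + 2(s-1)e^{-2s}`: for every `ε > 0` there
is `M > 0` such that every zero `s` of `T` with `Re s ≥ 0` and `|Im s| ≥ M` lies within
`ε` of `ln √2 + i (k + 1/2) π` for some integer `k`. -/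
theorem stmt_11 :
    ∀ ε : ℝ, 0 < ε → ∃ M : ℝ, 0 < M ∧ ∀ s : ℂ,
      (s + 1) + 2 * (s - 1) * Complex.exp (-2 * s) = 0 →
      0 ≤ s.re → M ≤ |s.im| →
      ∃ k : ℤ, ‖s - ((Real.log (Real.sqrt 2) : ℂ) + ((k : ℂ) + 1 / 2) * π * Complex.I)‖ < ε := by
  intro ε hε
  have hcont : ContinuousAt Complex.log 1 := by
    exact continuousAt_clog Complex.one_mem_slitPlane
  rw [Metric.continuousAt_iff] at hcont
  obtain ⟨δ, hδ, hδ'⟩ := hcont ε hε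
  refine ⟨max (4 / δ) 1, lt_of_lt_of_le one_pos (le_max_right _ _), ?_⟩
  intro s hs hre him
  have hπ := Real.pi_pos
  have hM1 : (1:ℝ) ≤ |s.im| := le_trans (le_max_right _ _) him
  have hM2 : 4 / δ ≤ |s.im| := le_trans (le_max_left _ _) him
  have habs : |s.im| ≤ ‖s + 1‖ := by
    have : |(s+1).im| ≤ ‖s + 1‖ := Complex.abs_im_le_norm _
    simpa using this
  have hne : s + 1 ≠ 0 := by
    intro h
    rw [h] at habs
    simp at habs
    rw [habs] at hM1
    simp at hM1
    linarith
  -- exp(2s) = -2(s-1)/(s+1)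
  have hE : Complex.exp (-2 * s) * Complex.exp (2 * s) = 1 := by
    rw [← Complex.exp_add]; ring_nf; exact Complex.exp_zero
  have hexp : (s + 1) * Complex.exp (2 * s) = -2 * (s - 1) := by
    have h2 := congrArg (· * Complex.exp (2 * s)) hs
    simp only [add_mul, zero_mul] at h2
    have : (s + 1) * Complex.exp (2*s) + 2 * (s - 1) * (Complex.exp (-2*s) * Complex.exp (2*s)) = 0 := by
      rw [← h2]; ring
    rw [hE, mul_one] at this
    linear_combination this
  set u : ℂ := (s - 1) / (s + 1) with hu
  have hu1 : u - 1 = -2 / (s + 1) := by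
    rw [hu]
    field_simp
    ring
  have hexpu : Complex.exp (2 * s) = -2 * u := by
    rw [hu]
    rw [mul_div_assoc', eq_div_iff hne]
    linear_combination hexp
  -- |u - 1| small
  have hdist : dist u 1 < δ := by
    rw [Complex.dist_eq, hu1]
    rw [norm_div]
    have h4 : (0:ℝ) < 4 / δ := by positivity
    have habs2 : (4:ℝ) / δ ≤ ‖s + 1‖ := le_trans hM2 habs
    have hpos : (0:ℝ) < ‖s + 1‖ := lt_of_lt_of_le h4 habs2
    have : ‖(-2:ℂ)‖ / ‖s + 1‖ ≤ 2 / (4 / δ) := by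
      apply div_le_div₀ (by norm_num) (by norm_num) h4 habs2
    have h24 : (2:ℝ) / (4 / δ) = δ / 2 := by field_simp; ring
    rw [h24] at this
    linarith
  -- choose k
  set k : ℤ := ⌈s.im / π⌉ - 1 with hk
  have hk1 : (k : ℝ) * π < s.im := by
    have := Int.ceil_lt_add_one (s.im / π)
    have hlt : ((k:ℝ)) < s.im / π := by
      push_cast [hk]; linarith
    calc (k:ℝ) * π < (s.im / π) * π := by exact mul_lt_mul_of_pos_right hlt hπ
    _ = s.im := by field_simp
  have hk2 : s.im ≤ ((k:ℝ) + 1) * π := by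
    have := Int.le_ceil (s.im / π)
    have hle : s.im / π ≤ (k:ℝ) + 1 := by push_cast [hk]; linarith
    calc s.im = (s.im / π) * π := by field_simp
    _ ≤ ((k:ℝ) + 1) * π := mul_le_mul_of_nonneg_right hle (le_of_lt hπ)
  set w : ℂ := 2 * s - (Real.log 2 : ℂ) - ((2*k+1 : ℂ)) * π * Complex.I with hw
  have hwim : w.im = 2 * s.im - (2*(k:ℝ)+1) * π := by
    rw [hw]
    simp only [Complex.sub_im, Complex.mul_im, Complex.mul_re, Complex.add_im, Complex.add_re,
      Complex.ofReal_im, Complex.ofReal_re, Complex.I_im, Complex.I_re,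
      Complex.intCast_im, Complex.intCast_re, Complex.one_im, Complex.one_re,
      Complex.re_ofNat, Complex.im_ofNat]
    ring
  have hwim1 : -π < w.im := by rw [hwim]; nlinarith
  have hwim2 : w.im ≤ π := by rw [hwim]; nlinarith
  -- exp w = u
  have hexpk : Complex.exp ((2*k+1 : ℂ) * π * Complex.I) = -1 := by
    have : ((2*k+1 : ℂ)) * π * Complex.I = ((2*k+1 : ℤ) : ℂ) * (π * Complex.I) := by push_cast; ring
    rw [this, Complex.exp_int_mul, Complex.exp_pi_mul_I]
    exact Odd.neg_one_zpow ⟨k, by ring⟩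
  have hexplog : Complex.exp ((Real.log 2 : ℂ)) = 2 := by
    rw [Complex.ofReal_log (by norm_num), Complex.exp_log (by norm_num)]
    norm_num
  have hew : Complex.exp w = u := by
    have : Complex.exp w * Complex.exp ((Real.log 2 : ℂ)) * Complex.exp ((2*k+1 : ℂ) * π * Complex.I) = Complex.exp (2 * s) := by
      rw [← Complex.exp_add, ← Complex.exp_add]
      congr 1
      rw [hw]; ring
    rw [hexpk, hexplog, hexpu] at this
    linear_combination (-1/2 : ℂ) * this
  have hlogw : Complex.log u = w := by
    rw [← hew, Complex.log_exp hwim1 hwim2]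
  have hwnorm : ‖w‖ < ε := by
    have := hδ' hdist
    rw [Complex.log_one, dist_zero_right, hlogw] at this
    exact this
  refine ⟨k, ?_⟩
  have hlogsqrt : (Real.log (Real.sqrt 2) : ℝ) = Real.log 2 / 2 := Real.log_sqrt (by norm_num)
  have hsw : s - ((Real.log (Real.sqrt 2) : ℂ) + ((k : ℂ) + 1 / 2) * π * Complex.I) = w / 2 := by
    rw [hw, hlogsqrt]
    push_cast
    ring
  rw [hsw]
  rw [norm_div]
  have h2n : ‖(2:ℂ)‖ = 2 := by norm_num
  rw [h2n]
  have := norm_nonneg w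
  linarith
end
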